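/- Let W = {x²y, xyx, yx², y²x, yxy, xy²}. If a commutative nil-variety of semigroups N satisfies an identity u = v where u is one of the words x²y or xy² and v is a word not in W, then N satisfies the identity x²y = 0. -/

import Mathlib

/-!
Formalization framework: semigroup varieties as Galois-closed equational theories
over the free semigroup on countably many letters.  A variety is represented by
its equational theory; the order `V ≤ W` ("V is a subvariety of W") is reverse
inclusion of theories.  `Com` is the lattice of commutative semigroup varieties,
realized as the subtype of varieties whose theory contains the commutative law.
-/

open FreeSemigroup

/-- Words: elements of the free semigroup over a countably infinite alphabet. -/
abbrev Word : Type := FreeSemigroup ℕ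

/-- A semigroup identity `u = v`. -/
abbrev SgId : Type := Word × Word

/-- `spow a n = a ^ (n + 1)` in any (multiplicative) semigroup. -/
def spow {M : Type*} [Mul M] (a : M) : ℕ → M
  | 0 => a
  | n + 1 => a * spow a n

/-- A semigroup `S` satisfies the identity `e.1 = e.2`. -/
def SatS (S : Type) [Semigroup S] (e : SgId) : Prop :=
  ∀ σ : ℕ → S, FreeSemigroup.lift σ e.1 = FreeSemigroup.lift σ e.2

/-- `S` is a model of the set of identities `E`. -/
def Models (S : Type) [Semigroup S] (E : Set SgId) : Prop :=
  ∀ e ∈ E, SatS S e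

/-- The equational theory generated by `E`: all identities holding in every
model of `E` (by Birkhoff's theorem this is exactly deductive closure). -/
def eqTh (E : Set SgId) : Set SgId :=
  { e | ∀ (S : Type) [Semigroup S], Models S E → SatS S e }

theorem subset_eqTh (E : Set SgId) : E ⊆ eqTh E := by
  intro e he S _ hS
  exact hS e he

theorem eqTh_mono {E F : Set SgId} (h : E ⊆ F) : eqTh E ⊆ eqTh F := by
  intro e he S _ hS
  exact he S fun e' he' => hS e' (h he')

theorem eqTh_idem (E : Set SgId) : eqTh (eqTh E) = eqTh E := by
  refine Set.Subset.antisymm ?_ (subset_eqTh _)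
  intro e he S _ hS
  exact he S fun e' he' => he' S hS

/-- A semigroup variety, given by its (Galois-closed) equational theory. -/
structure SgVariety where
  th : Set SgId
  closed : eqTh th = th

theorem SgVariety.ext' {V W : SgVariety} (h : V.th = W.th) : V = W := by
  cases V; cases W; cases h; rfl

/-- The variety defined by a set of identities. -/
def varOf (E : Set SgId) : SgVariety :=
  ⟨eqTh E, eqTh_idem E⟩

/-- `V ≤ W` iff `V` is a subvariety of `W`, i.e. the theory of `W` is contained
in the theory of `V`. -/
instance : PartialOrder SgVariety where
  le V W := W.th ⊆ V.th
  le_refl V := Set.Subset.refl _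
  le_trans a b c h1 h2 := Set.Subset.trans h2 h1
  le_antisymm a b h1 h2 := SgVariety.ext' (Set.Subset.antisymm h2 h1)

/-- The lattice **SEM** of all semigroup varieties: join is intersection of
theories; meet is the variety defined by the union of the theories. -/
instance : Lattice SgVariety :=
  { (inferInstance : PartialOrder SgVariety) with
    sup := fun V W =>
      ⟨V.th ∩ W.th, by
        refine Set.Subset.antisymm (Set.subset_inter ?_ ?_) (subset_eqTh _)
        · exact (eqTh_mono Set.inter_subset_left).trans (le_of_eq V.closed)
        · exact (eqTh_mono Set.inter_subset_right).trans (le_of_eq W.closed)⟩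
    le_sup_left := fun V W => Set.inter_subset_left
    le_sup_right := fun V W => Set.inter_subset_right
    sup_le := fun V W U h1 h2 => Set.subset_inter h1 h2
    inf := fun V W => varOf (V.th ∪ W.th)
    inf_le_left := fun V W => Set.subset_union_left.trans (subset_eqTh _)
    inf_le_right := fun V W => Set.subset_union_right.trans (subset_eqTh _)
    le_inf := fun U V W h1 h2 =>
      (eqTh_mono (Set.union_subset h1 h2)).trans (le_of_eq U.closed) }

/-- The letters `x`, `y`, `z`. -/
def xw : Word := FreeSemigroup.of 0
def yw : Word := FreeSemigroup.of 1
def zw : Word := FreeSemigroup.of 2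

/-- The commutative law `xy = yx`. -/
def commId : SgId := (xw * yw, yw * xw)

/-- The lattice **Com**: commutative semigroup varieties. -/
abbrev ComVariety : Type := { V : SgVariety // commId ∈ V.th }

instance : Lattice ComVariety :=
  { (inferInstance : PartialOrder ComVariety) with
    sup := fun V W => ⟨V.1 ⊔ W.1, ⟨V.2, W.2⟩⟩
    le_sup_left := fun V W => @le_sup_left SgVariety _ V.1 W.1
    le_sup_right := fun V W => @le_sup_right SgVariety _ V.1 W.1
    sup_le := fun V W U h1 h2 => @sup_le SgVariety _ V.1 W.1 U.1 h1 h2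
    inf := fun V W => ⟨V.1 ⊓ W.1, subset_eqTh _ (Set.mem_union_left _ V.2)⟩
    inf_le_left := fun V W => @inf_le_left SgVariety _ V.1 W.1
    inf_le_right := fun V W => @inf_le_right SgVariety _ V.1 W.1
    le_inf := fun U V W h1 h2 => @le_inf SgVariety _ U.1 V.1 W.1 h1 h2 }

/-- The trivial variety `T`. -/
def trivialVar : SgVariety := varOf Set.univ

/-- The variety `COM` of all commutative semigroups. -/
def COMvar : SgVariety := varOf {commId}

/-- The variety `SL` of semilattices. -/
def SLvar : SgVariety := varOf {commId, (xw * xw, xw)}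

/-- `C_m = var{xᵐ = xᵐ⁺¹, xy = yx}` for `m ≥ 1`, and `C_0 = T`. -/
def Cvar : ℕ → SgVariety
  | 0 => trivialVar
  | m + 1 => varOf {commId, (spow xw m, spow xw (m + 1))}

def Tcom : ComVariety := ⟨trivialVar, subset_eqTh _ (Set.mem_univ _)⟩
def COMcom : ComVariety := ⟨COMvar, subset_eqTh _ rfl⟩
def SLcom : ComVariety := ⟨SLvar, subset_eqTh _ (Set.mem_insert _ _)⟩
def Ccom (m : ℕ) : ComVariety :=
  ⟨Cvar m, by
    cases m with
    | zero => exact subset_eqTh _ (Set.mem_univ _)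
    | succ m => exact subset_eqTh _ (Set.mem_insert _ _)⟩

/-- A semigroup (nonempty, with the given multiplication) is a group. -/
def IsGroupS (S : Type) [Semigroup S] : Prop :=
  ∃ e : S, (∀ a : S, e * a = a ∧ a * e = a) ∧ ∀ a : S, ∃ b : S, a * b = e ∧ b * a = e

/-- A nilsemigroup: there is a zero element and some power of every element is zero. -/
def IsNilS (S : Type) [Semigroup S] : Prop :=
  ∃ z : S, (∀ a : S, z * a = z ∧ a * z = z) ∧ ∀ a : S, ∃ n : ℕ, spow a n = z

/-- A group variety: all its (nonempty) members are groups. -/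
def IsGroupVariety (V : SgVariety) : Prop :=
  ∀ (S : Type) [Semigroup S], Nonempty S → Models S V.th → IsGroupS S

/-- A nil-variety: all its (nonempty) members are nilsemigroups. -/
def IsNilVariety (V : SgVariety) : Prop :=
  ∀ (S : Type) [Semigroup S], Nonempty S → Models S V.th → IsNilS S

/-- A combinatorial variety: all groups in it are singletons. -/
def IsCombinatorial (V : SgVariety) : Prop :=
  ∀ (S : Type) [Semigroup S], Models S V.th → IsGroupS S → Subsingleton S

/-- A periodic variety: satisfies `xⁿ = xⁿ⁺ᵏ` for some `n, k ≥ 1`. -/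
def IsPeriodic (V : SgVariety) : Prop :=
  ∃ n k : ℕ, (spow xw n, spow xw (n + k + 1)) ∈ V.th

/-- The letter `k` occurs in the word `w`. -/
def occursIn (k : ℕ) (w : Word) : Prop := k = w.head ∨ k ∈ w.tail

/-- `S` satisfies the identity `w = 0` (i.e. the system `wx = xw = w`, `x` fresh):
every value of `w` in `S` is a (two-sided) zero element. -/
def SatZeroS (S : Type) [Semigroup S] (w : Word) : Prop :=
  ∀ (σ : ℕ → S) (a : S),
    FreeSemigroup.lift σ w * a = FreeSemigroup.lift σ w ∧
      a * FreeSemigroup.lift σ w = FreeSemigroup.lift σ w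

/-- The variety `V` satisfies the identity `w = 0`. -/
def VSatZero (V : SgVariety) (w : Word) : Prop :=
  ∀ (S : Type) [Semigroup S], Models S V.th → SatZeroS S w

/-- The words `x²`, `x³`, `x²y`, `xy²`, `x²yz`. -/
def w_xx : Word := xw * xw
def w_xxx : Word := xw * xw * xw
def w_xxy : Word := xw * xw * yw
def w_xyy : Word := xw * yw * yw
def w_xxyz : Word := xw * xw * yw * zw

/-- The identity `x²y = xy²`. -/
def idQ : SgId := (w_xxy, w_xyy)

/-- The pair of identities expressing `w = 0`, with `k` a fresh letter. -/
def zeroPair (w : Word) (k : ℕ) : Set SgId :=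
  {(w * FreeSemigroup.of k, w), (FreeSemigroup.of k * w, w)}

/-- `xprodTo n = x₁x₂⋯xₙ` (for `n ≥ 1`), on the letters `0, …, n-1`. -/
def xprodTo : ℕ → Word
  | 0 => FreeSemigroup.of 0
  | 1 => FreeSemigroup.of 0
  | n + 2 => xprodTo (n + 1) * FreeSemigroup.of (n + 1)

/-- `I = var{x²y = xy², x²yz = 0, xy = yx}`. -/
def Ivar : SgVariety := varOf ({commId, idQ} ∪ zeroPair w_xxyz 3)

/-- `K = var{x²y = 0, xy = yx}`. -/
def Kvar : SgVariety := varOf ({commId} ∪ zeroPair w_xxy 2)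

/-- `L = var{x² = 0, xy = yx}`. -/
def Lvar : SgVariety := varOf ({commId} ∪ zeroPair w_xx 1)

/-- `I_n = var{x²yz = x₁⋯xₙ = 0, x²y = xy², xy = yx}`. -/
def Ivarn (n : ℕ) : SgVariety :=
  varOf ({commId, idQ} ∪ zeroPair w_xxyz 3 ∪ zeroPair (xprodTo n) n)

/-- `J = var{x²yz = x³ = 0, x²y = xy², xy = yx}`. -/
def Jvar : SgVariety := varOf ({commId, idQ} ∪ zeroPair w_xxyz 3 ∪ zeroPair w_xxx 1)

/-- `J_n = var{x²yz = x³ = x₁⋯xₙ = 0, x²y = xy², xy = yx}`. -/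
def Jvarn (n : ℕ) : SgVariety :=
  varOf ({commId, idQ} ∪ zeroPair w_xxyz 3 ∪ zeroPair w_xxx 1 ∪ zeroPair (xprodTo n) n)

/-- `K_n = var{x²y = x₁⋯xₙ = 0, xy = yx}`. -/
def Kvarn (n : ℕ) : SgVariety :=
  varOf ({commId} ∪ zeroPair w_xxy 2 ∪ zeroPair (xprodTo n) n)

/-- `L_n = var{x² = x₁⋯xₙ = 0, xy = yx}`. -/
def Lvarn (n : ℕ) : SgVariety :=
  varOf ({commId} ∪ zeroPair w_xx 1 ∪ zeroPair (xprodTo n) n)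

/-- Generators of `ZR(U)`: the commutative law together with all 0-reduced
identities (in the form of the corresponding identity pairs) holding in `U`. -/
def ZRgen (U : SgVariety) : Set SgId :=
  {commId} ∪ { e : SgId | ∃ (w : Word) (k : ℕ), ¬ occursIn k w ∧ VSatZero U w ∧
      (e = (w * FreeSemigroup.of k, w) ∨ e = (FreeSemigroup.of k * w, w)) }

/-- `ZR(U)`: the variety given by the commutative law and all 0-reduced
identities holding in `U`. -/
def ZRvar (U : SgVariety) : SgVariety := varOf (ZRgen U)

def Icom : ComVariety := ⟨Ivar, subset_eqTh _ (Set.mem_union_left _ (Set.mem_insert _ _))⟩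

def ZRcom (U : SgVariety) : ComVariety :=
  ⟨ZRvar U, subset_eqTh _ (Set.mem_union_left _ rfl)⟩

/-- All nilsemigroups in `V` are nilpotent of degree ≤ n, i.e. satisfy `x₁⋯xₙ = 0`. -/
def HasDegLe (V : SgVariety) (n : ℕ) : Prop :=
  ∀ (S : Type) [Semigroup S], Nonempty S → Models S V.th → IsNilS S → SatZeroS S (xprodTo n)

/-- `deg V = d` (with `d = ⊤` meaning infinite degree). -/
def DegIs (V : SgVariety) (d : ℕ∞) : Prop :=
  (∃ n : ℕ, 0 < n ∧ d = (n : ℕ∞) ∧ IsLeast {m : ℕ | 0 < m ∧ HasDegLe V m} n) ∨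
    (d = ⊤ ∧ ∀ n : ℕ, 0 < n → ¬ HasDegLe V n)

/-- Upper-modular element of a lattice. -/
def IsUpperModular {L : Type*} [Lattice L] (a : L) : Prop :=
  ∀ b c : L, b ≤ a → a ⊓ (b ⊔ c) = b ⊔ (a ⊓ c)

/-- Codistributive element of a lattice. -/
def IsCodistributive {L : Type*} [Lattice L] (a : L) : Prop :=
  ∀ b c : L, a ⊓ (b ⊔ c) = (a ⊓ b) ⊔ (a ⊓ c)

/-- Costandard element of a lattice. -/
def IsCostandard {L : Type*} [Lattice L] (a : L) : Prop :=
  ∀ b c : L, (a ⊓ b) ⊔ c = (a ⊔ c) ⊓ (b ⊔ c)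

/-- Modular element of a lattice. -/
def IsModularElt {L : Type*} [Lattice L] (a : L) : Prop :=
  ∀ b c : L, b ≤ c → (a ⊔ b) ⊓ c = (a ⊓ c) ⊔ b

/-- Neutral element of a lattice, via the median characterization
(equivalent to: every triple containing `a` generates a distributive
sublattice; Grätzer, "Lattice Theory: Foundation", Theorem 254). -/
def IsNeutralElt {L : Type*} [Lattice L] (a : L) : Prop :=
  ∀ b c : L, (a ⊓ b) ⊔ (b ⊓ c) ⊔ (c ⊓ a) = (a ⊔ b) ⊓ (b ⊔ c) ⊓ (c ⊔ a)

/-- The set `W = {x²y, xyx, yx², y²x, yxy, xy²}`. -/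
def Wset : Set Word :=
  {xw * xw * yw, xw * yw * xw, yw * xw * xw, yw * yw * xw, yw * xw * yw, xw * yw * yw}


namespace XXYAux

variable {S : Type} [Semigroup S]

/-- Commutative monoid structure on `WithOne S` from commutativity of `S`. -/
def cMon (hc : ∀ a b : S, a * b = b * a) : CommMonoid (WithOne S) :=
  { (inferInstance : Monoid (WithOne S)) with
    mul_comm := by
      intro x y
      induction x using WithOne.recOneCoe with
      | one => simp
      | coe a =>
        induction y using WithOne.recOneCoe with
        | one => simp
        | coe b => rw [← WithOne.coe_mul, ← WithOne.coe_mul, hc] }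

lemma foldl_coe (σ : ℕ → S) : ∀ (t : List ℕ) (s : S),
    ((t.foldl (fun a b => a * σ b) s : S) : WithOne S)
      = (s : WithOne S) * (t.map fun k => ((σ k : S) : WithOne S)).prod
  | [], s => by simp
  | b :: t, s => by
    rw [List.foldl_cons, foldl_coe σ t (s * σ b), List.map_cons, List.prod_cons,
      WithOne.coe_mul, mul_assoc]

lemma lift_coe (σ : ℕ → S) (w : FreeSemigroup ℕ) :
    ((FreeSemigroup.lift σ w : S) : WithOne S)
      = ((w.head :: w.tail).map fun k => ((σ k : S) : WithOne S)).prod := by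
  show ((w.tail.foldl (fun a b => a * σ b) (σ w.head) : S) : WithOne S) = _
  rw [foldl_coe, List.map_cons, List.prod_cons]

variable {z : S}

lemma zabsL (hz : ∀ a : S, z * a = z ∧ a * z = z) (x : WithOne S) :
    (z : WithOne S) * x = z := by
  induction x using WithOne.recOneCoe with
  | one => simp
  | coe a => rw [← WithOne.coe_mul, (hz a).1]

lemma zabsR (hz : ∀ a : S, z * a = z ∧ a * z = z) (x : WithOne S) :
    x * (z : WithOne S) = z := by
  induction x using WithOne.recOneCoe with
  | one => simp
  | coe a => rw [← WithOne.coe_mul, (hz a).2]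

lemma prod_eq_z (hz : ∀ a : S, z * a = z ∧ a * z = z) (σ : ℕ → S) (k : ℕ) (hσ : σ k = z) :
    ∀ l : List ℕ, k ∈ l → (l.map fun i => ((σ i : S) : WithOne S)).prod = (z : WithOne S)
  | a :: l, hm => by
    rw [List.map_cons, List.prod_cons]
    rcases List.mem_cons.mp hm with rfl | hm'
    · rw [hσ, zabsL hz]
    · rw [prod_eq_z hz σ k hσ l hm', zabsR hz]

lemma coe_spow (a : S) : ∀ n : ℕ, ((spow a n : S) : WithOne S) = (a : WithOne S) ^ (n + 1)
  | 0 => (pow_one _).symm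
  | n + 1 => by
    show ((a * spow a n : S) : WithOne S) = _
    rw [WithOne.coe_mul, coe_spow a n]
    exact (pow_succ' _ _).symm

lemma length_counts : ∀ l : List ℕ, (∀ x ∈ l, x = 0 ∨ x = 1) →
    l.length = l.count 0 + l.count 1
  | [], _ => by simp
  | a :: l, h => by
    have ih := length_counts l fun x hx => h x (List.mem_cons_of_mem _ hx)
    rcases h a List.mem_cons_self with rfl | rfl <;>
      simp [List.count_cons, ih] <;> omega

lemma count_prod {M : Type} [CommMonoid M] (f : ℕ → M) :
    ∀ l : List ℕ, (∀ x ∈ l, x = 0 ∨ x = 1) →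
      (l.map f).prod = f 0 ^ l.count 0 * f 1 ^ l.count 1
  | [], _ => by simp
  | a :: l, h => by
    have ih := count_prod f l fun x hx => h x (List.mem_cons_of_mem _ hx)
    rcases h a List.mem_cons_self with rfl | rfl
    · rw [List.map_cons, List.prod_cons, ih]
      have h0 : (0 :: l).count 0 = l.count 0 + 1 := List.count_cons_self
      have h1 : (0 :: l).count 1 = l.count 1 := by simp [List.count_cons]
      rw [h0, h1, pow_succ', mul_assoc]
    · rw [List.map_cons, List.prod_cons, ih]
      have h0 : (1 :: l).count 0 = l.count 0 := by simp [List.count_cons]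
      have h1 : (1 :: l).count 1 = l.count 1 + 1 := List.count_cons_self
      rw [h0, h1, pow_succ', mul_left_comm]





lemma pump {M : Type} [Monoid M] {s t : M} (h : s = s * t) : ∀ j : ℕ, s = s * t ^ j
  | 0 => by rw [pow_zero, mul_one]
  | j + 1 => by rw [pow_succ, ← mul_assoc, ← pump h j]; exact h

lemma zpow_eq {M : Type} [Monoid M] {Z : M} (hZ : ∀ x : M, Z * x = Z) :
    ∀ {c : ℕ}, 1 ≤ c → Z ^ c = Z
  | c + 1, _ => by rw [pow_succ', hZ]

lemma rearr {M : Type} [CommMonoid M] (A B : M) (c p d q : ℕ) :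
    A ^ (c + p) * B ^ (d + q) = A ^ c * B ^ d * (A ^ p * B ^ q) := by
  rw [pow_add, pow_add]
  exact mul_mul_mul_comm _ _ _ _

lemma main_alg {M : Type} [CommMonoid M] (Z : M) (hZ : ∀ x : M, Z * x = Z)
    (R : Set M) (hmul : ∀ A ∈ R, ∀ B ∈ R, A * B ∈ R) (hZR : Z ∈ R)
    (hnil : ∀ A ∈ R, ∃ j, 1 ≤ j ∧ A ^ j = Z)
    (m n : ℕ) (hmn : 1 ≤ m + n) (h21 : ¬(m = 2 ∧ n = 1)) (h12 : ¬(m = 1 ∧ n = 2))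
    (H : ∀ A ∈ R, ∀ B ∈ R, A ^ 2 * B = A ^ m * B ^ n) :
    ∀ A ∈ R, ∀ B ∈ R, A ^ 2 * B = Z := by
  have hZ' : ∀ x : M, x * Z = Z := fun x => (mul_comm x Z).trans (hZ x)
  have powmem : ∀ (k : ℕ), ∀ A ∈ R, ∀ B ∈ R, A ^ k * B ∈ R := by
    intro k A hA B hB
    induction k with
    | zero => simpa using hB
    | succ k ih =>
      have : A ^ (k + 1) * B = A * (A ^ k * B) := by
        rw [pow_succ', mul_assoc]
      rw [this]
      exact hmul A hA _ ih
  -- case n = 0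
  rcases Nat.eq_zero_or_pos n with rfl | hn
  · intro A hA B hB
    have h1 := H A hA Z hZR
    rw [pow_zero, mul_one, hZ'] at h1
    rw [H A hA B hB, pow_zero, mul_one, ← h1]
  rcases Nat.eq_zero_or_pos m with rfl | hm
  -- case m = 0
  · intro A hA B hB
    have h1 := H Z hZR B hB
    rw [zpow_eq hZ (by norm_num : (1:ℕ) ≤ 2), hZ, pow_zero, one_mul] at h1
    rw [H A hA B hB, pow_zero, one_mul, ← h1]
  by_cases hm2 : 2 ≤ m
  · -- m ≥ 2, n ≥ 1, so m + n ≥ 4 since (m,n) ≠ (2,1)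
    intro A hA B hB
    obtain ⟨m', rfl⟩ := Nat.exists_eq_add_of_le hm2
    obtain ⟨n', rfl⟩ := Nat.exists_eq_add_of_le hn
    have hmn4 : 1 ≤ m' + n' := by
      rcases Nat.eq_zero_or_pos (m' + n') with h0 | h1
      · exact absurd ⟨by omega, by omega⟩ h21
      · exact h1
    have h := H A hA B hB
    rw [rearr A B 2 m' 1 n', pow_one] at h
    rcases Nat.eq_zero_or_pos m' with rfl | hm'
    · obtain ⟨j, hj1, hjZ⟩ := hnil B hB
      have hp := pump h j
      have ht : (A ^ 0 * B ^ n') ^ j = Z := by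
        rw [pow_zero, one_mul, ← pow_mul, Nat.mul_comm, pow_mul, hjZ,
          zpow_eq hZ (by omega)]
      rw [ht, hZ'] at hp
      exact hp
    · obtain ⟨j, hj1, hjZ⟩ := hnil A hA
      have hp := pump h j
      have ht : (A ^ m' * B ^ n') ^ j = Z := by
        rw [mul_pow, ← pow_mul, Nat.mul_comm m' j, pow_mul, hjZ,
          zpow_eq hZ (by omega), hZ]
      rw [ht, hZ'] at hp
      exact hp
  · -- m = 1
    have hm1 : m = 1 := by omega
    subst hm1
    rcases Nat.lt_or_ge n 3 with hn3 | hn3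
    · -- n = 1 (n = 2 excluded)
      have hne2 : n ≠ 2 := fun h => h12 ⟨rfl, h⟩
      have hn1 : n = 1 := by omega
      subst hn1
      have step : ∀ A ∈ R, ∀ C ∈ R, A ^ 2 * C = A * C := by
        intro A hA C hC
        have h := H A hA C hC
        rw [pow_one, pow_one] at h
        exact h
      have claim : ∀ (k : ℕ), ∀ A ∈ R, ∀ B ∈ R, A ^ (k + 1) * B = A * B := by
        intro k
        induction k with
        | zero => intro A hA B hB; rw [pow_one]
        | succ k ih =>
          intro A hA B hB
          have h1 : A ^ (k + 1 + 1) * B = A ^ 2 * (A ^ k * B) := by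
            rw [← mul_assoc, ← pow_add, show 2 + k = k + 1 + 1 from by omega]
          rw [h1, step A hA _ (powmem k A hA B hB), ← mul_assoc, ← pow_succ']
          exact ih A hA B hB
      intro A hA B hB
      obtain ⟨j, hj1, hjZ⟩ := hnil A hA
      have h2 := claim j A hA B hB
      rw [pow_succ, mul_assoc, mul_comm (A ^ j), hjZ, hZ'] at h2
      -- h2 : Z = A * B
      calc A ^ 2 * B = A * (A * B) := by rw [pow_two, mul_assoc]
        _ = A * Z := by rw [← h2]
        _ = Z := hZ' A
    · -- m = 1, n ≥ 3
      obtain ⟨n'', rfl⟩ := Nat.exists_eq_add_of_le hn3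
      have hcube : ∀ A ∈ R, ∀ B ∈ R, A ^ 3 * B = Z := by
        intro A hA B hB
        have h := H A hA (A * B) (hmul A hA B hB)
        have hL : A ^ 2 * (A * B) = A ^ 3 * B := by
          rw [← mul_assoc, ← pow_succ]
        have hR : A ^ 1 * (A * B) ^ (3 + n'') =
            A ^ 3 * B * (A ^ (1 + n'') * B ^ (2 + n'')) := by
          rw [pow_one, mul_pow, ← mul_assoc, ← pow_succ',
            show 3 + n'' + 1 = 3 + (1 + n'') from by omega,
            show 3 + n'' = 1 + (2 + n'') from by omega, rearr, pow_one]
        rw [hL, hR] at h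
        obtain ⟨j, hj1, hjZ⟩ := hnil A hA
        have hp := pump h j
        have ht : (A ^ (1 + n'') * B ^ (2 + n'')) ^ j = Z := by
          rw [mul_pow, ← pow_mul, Nat.mul_comm, pow_mul, hjZ,
            zpow_eq hZ (by omega), hZ]
        rw [ht, hZ'] at hp
        exact hp
      intro A hA B hB
      have h := H A hA B hB
      have hd : B ^ n'' * A ∈ R := powmem n'' B hB A hA
      have hc := hcube B hB (B ^ n'' * A) hd
      have hrw : A ^ 1 * B ^ (3 + n'') = B ^ 3 * (B ^ n'' * A) := by
        rw [pow_one, mul_comm, pow_add, mul_assoc]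
      rw [h, hrw, hc]

end XXYAux

lemma prodA : xw * xw * yw = (⟨0, [0, 1]⟩ : Word) := rfl
lemma prodB : xw * yw * xw = (⟨0, [1, 0]⟩ : Word) := rfl
lemma prodC : yw * xw * xw = (⟨1, [0, 0]⟩ : Word) := rfl
lemma prodD : yw * yw * xw = (⟨1, [1, 0]⟩ : Word) := rfl
lemma prodE : yw * xw * yw = (⟨1, [0, 1]⟩ : Word) := rfl
lemma prodF : xw * yw * yw = (⟨0, [1, 1]⟩ : Word) := rfl

lemma mem_W_of_counts (v : Word) (hL : ∀ x ∈ v.head :: v.tail, x = 0 ∨ x = 1)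
    (h : ((v.head :: v.tail).count 0 = 2 ∧ (v.head :: v.tail).count 1 = 1) ∨
         ((v.head :: v.tail).count 0 = 1 ∧ (v.head :: v.tail).count 1 = 2)) :
    v ∈ Wset := by
  obtain ⟨a, t⟩ := v
  dsimp only at hL h ⊢
  have hlen := XXYAux.length_counts _ hL
  have ht2 : t.length = 2 := by
    simp only [List.length_cons] at hlen
    rcases h with ⟨h0, h1⟩ | ⟨h0, h1⟩ <;> omega
  rcases t with _ | ⟨s, t⟩
  · simp at ht2
  rcases t with _ | ⟨r, t⟩
  · simp at ht2
  rcases t with _ | ⟨w, t⟩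
  swap
  · simp at ht2
  have ha := hL a (by simp)
  have hs := hL s (by simp)
  have hr := hL r (by simp)
  simp only [Wset, prodA, prodB, prodC, prodD, prodE, prodF, Set.mem_insert_iff,
    Set.mem_singleton_iff]
  rcases ha with rfl | rfl <;> rcases hs with rfl | rfl <;> rcases hr with rfl | rfl <;>
    simp_all [List.count_cons]

/-- Corollary `xxy=w` of the paper.  If a commutative
nil-variety `N` satisfies an identity `u = v` with `u ∈ {x²y, xy²}` and
`v ∉ W`, then `N` satisfies `x²y = 0`. -/
theorem satisfies_xxy_eq_zero (N : ComVariety) (hN : IsNilVariety N.1)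
    (u v : Word) (hu : u = w_xxy ∨ u = w_xyy) (hv : v ∉ Wset)
    (huv : (u, v) ∈ N.1.th) :
    VSatZero N.1 w_xxy := by
  intro S instS hS
  intro σ c0
  have hid : ∀ e ∈ N.1.th, ∀ τ : ℕ → S,
      FreeSemigroup.lift τ e.1 = FreeSemigroup.lift τ e.2 := fun e he τ => hS e he τ
  have hcomm : ∀ a b : S, a * b = b * a := by
    intro a b
    have h := hid commId N.2 (fun k => if k = 0 then a else b)
    simpa [commId, xw, yw] using h
  obtain ⟨z, hz, hnilS⟩ := hN S ⟨σ 0⟩ hS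
  letI : CommMonoid (WithOne S) := XXYAux.cMon hcomm
  have key : ∀ c d : S, c * c * d = z := by
    intro c d
    by_cases hLall : ∀ x ∈ v.head :: v.tail, x = 0 ∨ x = 1
    · -- all letters of v among {0, 1}: count argument
      have hmn : 1 ≤ (v.head :: v.tail).count 0 + (v.head :: v.tail).count 1 := by
        have hlc := XXYAux.length_counts _ hLall
        simp only [List.length_cons] at hlc
        omega
      have hW1 : ¬((v.head :: v.tail).count 0 = 2 ∧ (v.head :: v.tail).count 1 = 1) :=
        fun hc => hv (mem_W_of_counts v hLall (Or.inl hc))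
      have hW2 : ¬((v.head :: v.tail).count 0 = 1 ∧ (v.head :: v.tail).count 1 = 2) :=
        fun hc => hv (mem_W_of_counts v hLall (Or.inr hc))
      have Hv : ∀ τ : ℕ → S, ((FreeSemigroup.lift τ v : S) : WithOne S)
          = ((τ 0 : S) : WithOne S) ^ (v.head :: v.tail).count 0 *
            ((τ 1 : S) : WithOne S) ^ (v.head :: v.tail).count 1 := by
        intro τ
        rw [XXYAux.lift_coe τ v]; exact XXYAux.count_prod _ _ hLall
      have Hex : ∃ p q : ℕ, 1 ≤ p + q ∧ ¬(p = 2 ∧ q = 1) ∧ ¬(p = 1 ∧ q = 2) ∧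
          ∀ c d : S, ((c * c * d : S) : WithOne S)
            = ((c : S) : WithOne S) ^ p * ((d : S) : WithOne S) ^ q := by
        rcases hu with rfl | rfl
        · refine ⟨_, _, hmn, hW1, hW2, fun c d => ?_⟩
          have h := hid (w_xxy, v) huv (fun i => if i = 0 then c else d)
          have h1 : FreeSemigroup.lift (fun i => if i = 0 then c else d) w_xxy
              = c * c * d := by simp [w_xxy, xw, yw]
          rw [h1] at h
          rw [h, Hv]
          norm_num
        · refine ⟨_, _, by omega, fun hc => hW2 ⟨hc.2, hc.1⟩, fun hc => hW1 ⟨hc.2, hc.1⟩,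
            fun c d => ?_⟩
          have h := hid (w_xyy, v) huv (fun i => if i = 0 then d else c)
          have h1 : FreeSemigroup.lift (fun i => if i = 0 then d else c) w_xyy
              = c * c * d := by
            simp only [w_xyy, xw, yw, map_mul, FreeSemigroup.lift_of]
            norm_num
            rw [mul_assoc, hcomm]
          rw [h1] at h
          rw [h, Hv]
          norm_num
          exact mul_comm _ _
      obtain ⟨p, q, hpq, h21, h12, H⟩ := Hex
      have halg := XXYAux.main_alg ((z : S) : WithOne S) (XXYAux.zabsL hz)
          (Set.range (fun s : S => ((s : S) : WithOne S)))
          (by rintro A ⟨a, rfl⟩ B ⟨b, rfl⟩; exact ⟨a * b, (WithOne.coe_mul a b).symm⟩)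
          ⟨z, rfl⟩
          (by rintro A ⟨a, rfl⟩
              obtain ⟨n0, hn0⟩ := hnilS a
              exact ⟨n0 + 1, by omega, (XXYAux.coe_spow a n0).symm.trans (congrArg _ hn0)⟩)
          p q hpq h21 h12
          (by rintro A ⟨cc, rfl⟩ B ⟨dd, rfl⟩
              exact (congrArg (· * ((dd : S) : WithOne S)) (pow_two ((cc : S) : WithOne S))).trans
                (H cc dd))
      have hfin := halg _ ⟨c, rfl⟩ _ ⟨d, rfl⟩
      exact WithOne.coe_inj.mp (show ((c * c * d : S) : WithOne S) = z from
        (congrArg (· * ((d : S) : WithOne S)) (pow_two ((c : S) : WithOne S))).symm.trans hfin)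
    · -- v contains a letter other than 0, 1
      push_neg at hLall
      obtain ⟨k, hk, hk0, hk1⟩ := hLall
      rcases hu with rfl | rfl
      · have hτk : (fun i => if i = 0 then c else if i = 1 then d else z) k = z := by
          simp [hk0, hk1]
        have hv0 : FreeSemigroup.lift
            (fun i => if i = 0 then c else if i = 1 then d else z) v = z :=
          WithOne.coe_inj.mp (by
            rw [XXYAux.lift_coe, XXYAux.prod_eq_z hz _ k hτk _ hk])
        have h := hid (w_xxy, v) huv (fun i => if i = 0 then c else if i = 1 then d else z)
        have h1 : FreeSemigroup.lift
            (fun i => if i = 0 then c else if i = 1 then d else z) w_xxy = c * c * d := by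
          simp [w_xxy, xw, yw]
        rw [h1, hv0] at h
        exact h
      · have hτk : (fun i => if i = 0 then d else if i = 1 then c else z) k = z := by
          simp [hk0, hk1]
        have hv0 : FreeSemigroup.lift
            (fun i => if i = 0 then d else if i = 1 then c else z) v = z :=
          WithOne.coe_inj.mp (by
            rw [XXYAux.lift_coe, XXYAux.prod_eq_z hz _ k hτk _ hk])
        have h := hid (w_xyy, v) huv (fun i => if i = 0 then d else if i = 1 then c else z)
        have h1 : FreeSemigroup.lift
            (fun i => if i = 0 then d else if i = 1 then c else z) w_xyy = c * c * d := by
          simp only [w_xyy, xw, yw, map_mul, FreeSemigroup.lift_of]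
          norm_num
          rw [mul_assoc, hcomm]
        rw [h1, hv0] at h
        exact h
  have hw : FreeSemigroup.lift σ w_xxy = σ 0 * σ 0 * σ 1 := by
    simp [w_xxy, xw, yw]
  rw [hw, key (σ 0) (σ 1)]
  exact ⟨(hz c0).1, (hz c0).2⟩
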